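/- arXiv:1105.1653 — 2 statements merged into one kernel-verified Lean document; each statement's English description precedes it below -/
import Mathlib

section
/- (Lemma 1(iii)) Let α ∈ (0,1], let V be an open set in ℝ^d, and let f, g ∈ C^{0,α}_loc(V). Let K be a compact subset of V, set ε₀ = dist(K, ℝ^d ∖ V)/2 and K₀ = {x ∈ ℝ^d : dist(x,K) ≤ ε₀}. Then there exists a constant C such that for all ε ∈ (0, ε₀): sup_{x ∈ K} |R^ε(f,g)(x)| ≤ C ε^{2α} ‖f‖_{C^{0,α}(K₀)} ‖g‖_{C^{0,α}(K₀)}. -/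
open MeasureTheory Set

/-- Mollification `f^ε(x) = ∫ ρ(z) f(x - εz) dz`. -/
noncomputable def mollify {d : ℕ} (ρ : EuclideanSpace ℝ (Fin d) → ℝ) (ε : ℝ)
    (f : EuclideanSpace ℝ (Fin d) → ℝ) (x : EuclideanSpace ℝ (Fin d)) : ℝ :=
  ∫ z, ρ z * f (x - ε • z)

/-- `r^ε(f,g)(x) = ∫ ρ(z) (f(x-εz) - f(x)) (g(x-εz) - g(x)) dz`. -/
noncomputable def rEps {d : ℕ} (ρ : EuclideanSpace ℝ (Fin d) → ℝ) (ε : ℝ)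
    (f g : EuclideanSpace ℝ (Fin d) → ℝ) (x : EuclideanSpace ℝ (Fin d)) : ℝ :=
  ∫ z, ρ z * ((f (x - ε • z) - f x) * (g (x - ε • z) - g x))

/-- `R^ε(f,g) = r^ε(f,g) - (f - f^ε)(g - g^ε)`. -/
noncomputable def REps {d : ℕ} (ρ : EuclideanSpace ℝ (Fin d) → ℝ) (ε : ℝ)
    (f g : EuclideanSpace ℝ (Fin d) → ℝ) (x : EuclideanSpace ℝ (Fin d)) : ℝ :=
  rEps ρ ε f g x - (f x - mollify ρ ε f x) * (g x - mollify ρ ε g x)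

/-- The Hölder norm `‖f‖_{C^{0,α}(S)} = sup_S |f| + sup_{x ≠ y ∈ S} |f x - f y| / ‖x-y‖^α`. -/
noncomputable def holderNorm {d : ℕ} (α : ℝ) (f : EuclideanSpace ℝ (Fin d) → ℝ)
    (S : Set (EuclideanSpace ℝ (Fin d))) : ℝ :=
  sSup ((fun x => |f x|) '' S) +
    sSup {r : ℝ | ∃ x ∈ S, ∃ y ∈ S, x ≠ y ∧ r = |f x - f y| / ‖x - y‖ ^ α}

/-- `f ∈ C^{0,α}_loc(V)`: the Hölder norm of `f` is finite on every compact subset of `V`. -/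
def MemHolderLoc {d : ℕ} (α : ℝ) (f : EuclideanSpace ℝ (Fin d) → ℝ)
    (V : Set (EuclideanSpace ℝ (Fin d))) : Prop :=
  ∀ K : Set (EuclideanSpace ℝ (Fin d)), K ⊆ V → IsCompact K →
    BddAbove ((fun x => |f x|) '' K) ∧
      BddAbove {r : ℝ | ∃ x ∈ K, ∃ y ∈ K, x ≠ y ∧ r = |f x - f y| / ‖x - y‖ ^ α}

section StmtAux

variable {d : ℕ}

/-- Hölder seminorm bound from a `BddAbove` hypothesis. -/
lemma holder_le {α : ℝ} (hα0 : 0 < α) {f : EuclideanSpace ℝ (Fin d) → ℝ}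
    {S : Set (EuclideanSpace ℝ (Fin d))}
    (hB : BddAbove {r : ℝ | ∃ x ∈ S, ∃ y ∈ S, x ≠ y ∧ r = |f x - f y| / ‖x - y‖ ^ α})
    {p q : EuclideanSpace ℝ (Fin d)} (hp : p ∈ S) (hq : q ∈ S) :
    |f p - f q| ≤
      sSup {r : ℝ | ∃ x ∈ S, ∃ y ∈ S, x ≠ y ∧ r = |f x - f y| / ‖x - y‖ ^ α}
        * ‖p - q‖ ^ α := by
  by_cases hpq : p = q
  · simp [hpq, Real.zero_rpow hα0.ne']
  · have hmem : |f p - f q| / ‖p - q‖ ^ α ∈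
        {r : ℝ | ∃ x ∈ S, ∃ y ∈ S, x ≠ y ∧ r = |f x - f y| / ‖x - y‖ ^ α} :=
      ⟨p, hp, q, hq, hpq, rfl⟩
    have hle := le_csSup hB hmem
    have hpos : (0:ℝ) < ‖p - q‖ ^ α :=
      Real.rpow_pos_of_pos (norm_sub_pos_iff.mpr hpq) α
    exact (div_le_iff₀ hpos).mp hle

lemma holderSemi_nonneg {α : ℝ} (f : EuclideanSpace ℝ (Fin d) → ℝ)
    (S : Set (EuclideanSpace ℝ (Fin d))) :
    0 ≤ sSup {r : ℝ | ∃ x ∈ S, ∃ y ∈ S, x ≠ y ∧ r = |f x - f y| / ‖x - y‖ ^ α} := by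
  refine Real.sSup_nonneg ?_
  rintro r ⟨x, -, y, -, -, rfl⟩
  exact div_nonneg (abs_nonneg _) (Real.rpow_nonneg (norm_nonneg _) _)

/-- A locally Hölder function is continuous at every point of the open set. -/
lemma continuousAt_of_memHolderLoc {α : ℝ} (hα0 : 0 < α)
    {f : EuclideanSpace ℝ (Fin d) → ℝ} {V : Set (EuclideanSpace ℝ (Fin d))}
    (hV : IsOpen V) (hf : MemHolderLoc α f V) {y : EuclideanSpace ℝ (Fin d)}
    (hy : y ∈ V) : ContinuousAt f y := by
  obtain ⟨r, hr0, hrV⟩ : ∃ r > 0, Metric.closedBall y r ⊆ V := by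
    obtain ⟨r, hr0, hrV⟩ := Metric.isOpen_iff.mp hV y hy
    exact ⟨r / 2, by linarith, (Metric.closedBall_subset_ball (by linarith)).trans hrV⟩
  have hcomp := (hf _ hrV (isCompact_closedBall y r)).2
  set M := sSup {s : ℝ | ∃ x ∈ Metric.closedBall y r, ∃ y' ∈ Metric.closedBall y r,
      x ≠ y' ∧ s = |f x - f y'| / ‖x - y'‖ ^ α} with hM
  have key : ∀ p ∈ Metric.closedBall y r, |f p - f y| ≤ M * ‖p - y‖ ^ α := fun p hp =>
    holder_le hα0 hcomp hp (Metric.mem_closedBall_self hr0.le)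
  rw [ContinuousAt, tendsto_iff_dist_tendsto_zero]
  have h1 : Filter.Tendsto (fun p : EuclideanSpace ℝ (Fin d) => M * ‖p - y‖ ^ α)
      (nhds y) (nhds 0) := by
    have h2 : Filter.Tendsto (fun p : EuclideanSpace ℝ (Fin d) => ‖p - y‖)
        (nhds y) (nhds 0) := by
      have h2' : Filter.Tendsto (fun p : EuclideanSpace ℝ (Fin d) => p - y)
          (nhds y) (nhds (y - y)) := (continuous_id.sub continuous_const).tendsto y
      rw [sub_self] at h2'
      simpa using h2'.norm
    have h3 : ContinuousAt (fun t : ℝ => M * t ^ α) 0 :=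
      continuousAt_const.mul (Real.continuousAt_rpow_const 0 α (Or.inr hα0.le))
    have := h3.tendsto.comp h2
    simpa [Function.comp_def, Real.zero_rpow hα0.ne'] using this
  refine squeeze_zero' (Filter.Eventually.of_forall fun p => dist_nonneg) ?_ h1
  filter_upwards [Metric.closedBall_mem_nhds y hr0] with p hp
  simpa [Real.dist_eq] using key p hp

end StmtAux

/-- Lemma 1(iii): `sup_K |R^ε(f,g)| ≤ C ε^{2α} ‖f‖_{C^{0,α}(K₀)} ‖g‖_{C^{0,α}(K₀)}`
for `0 < ε < ε₀`, where `ε₀ = dist(K, ℝ^d ∖ V)/2` and `K₀` is the closed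
`ε₀`-neighbourhood of `K`. -/
theorem stmt6 (d : ℕ) (α : ℝ) (hα0 : 0 < α) (hα1 : α ≤ 1)
    (ρ : EuclideanSpace ℝ (Fin d) → ℝ)
    (hρ_smooth : ContDiff ℝ (⊤ : ℕ∞) ρ) (hρ_nonneg : ∀ x, 0 ≤ ρ x)
    (hρ_supp : tsupport ρ ⊆ Metric.ball 0 1)
    (hρ_symm : ∀ x, ρ (-x) = ρ x) (hρ_int : (∫ x, ρ x) = 1)
    (V : Set (EuclideanSpace ℝ (Fin d))) (hV : IsOpen V)
    (f g : EuclideanSpace ℝ (Fin d) → ℝ)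
    (hf : MemHolderLoc α f V) (hg : MemHolderLoc α g V)
    (K : Set (EuclideanSpace ℝ (Fin d))) (hK : IsCompact K) (hKV : K ⊆ V) :
    ∃ C : ℝ, ∀ ε : ℝ, 0 < ε → ε < sInf (Set.image2 dist K Vᶜ) / 2 →
      ∀ x ∈ K, |REps ρ ε f g x| ≤
        C * ε ^ (2 * α) *
          holderNorm α f {y | Metric.infDist y K ≤ sInf (Set.image2 dist K Vᶜ) / 2} *
          holderNorm α g {y | Metric.infDist y K ≤ sInf (Set.image2 dist K Vᶜ) / 2} := by
  classical
  refine ⟨2, ?_⟩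
  intro ε hε0 hεlt x hxK
  set D := sInf (Set.image2 dist K Vᶜ) with hDdef
  set ε₀ := D / 2 with hε₀def
  set K₀ := {y | Metric.infDist y K ≤ ε₀} with hK₀def
  have hε₀pos : 0 < ε₀ := lt_trans hε0 hεlt
  have hKne : K.Nonempty := ⟨x, hxK⟩
  -- K₀ ⊆ V
  have hK₀V : K₀ ⊆ V := by
    intro y hy
    by_contra hyV
    have h1 : Metric.infDist y K < D := lt_of_le_of_lt hy (by
      rw [hε₀def]; linarith)
    obtain ⟨p, hpK, hpd⟩ := (Metric.infDist_lt_iff hKne).mp h1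
    have hDle : D ≤ dist p y := by
      refine csInf_le ⟨0, ?_⟩ ⟨p, hpK, y, hyV, rfl⟩
      rintro s ⟨a, -, b, -, rfl⟩
      exact dist_nonneg
    rw [dist_comm] at hpd
    linarith
  -- K₀ compact
  have hK₀closed : IsClosed K₀ :=
    isClosed_le (Metric.continuous_infDist_pt K) continuous_const
  have hK₀bdd : Bornology.IsBounded K₀ := by
    refine (hK.isBounded.thickening (δ := ε₀ + 1)).subset ?_
    intro y hy
    exact (Metric.mem_thickening_iff_infDist_lt hKne).mpr (lt_of_le_of_lt hy (by linarith))
  have hK₀c : IsCompact K₀ := Metric.isCompact_of_isClosed_isBounded hK₀closed hK₀bdd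
  have hK₀K : K ⊆ K₀ := fun y hy =>
    le_of_eq_of_le (Metric.infDist_zero_of_mem hy) hε₀pos.le
  obtain ⟨hfA, hfH⟩ := hf K₀ hK₀V hK₀c
  obtain ⟨hgA, hgH⟩ := hg K₀ hK₀V hK₀c
  set Hf := sSup {r : ℝ | ∃ x ∈ K₀, ∃ y ∈ K₀, x ≠ y ∧ r = |f x - f y| / ‖x - y‖ ^ α} with hHfdef
  set Hg := sSup {r : ℝ | ∃ x ∈ K₀, ∃ y ∈ K₀, x ≠ y ∧ r = |g x - g y| / ‖x - y‖ ^ α} with hHgdef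
  have hHf0 : 0 ≤ Hf := holderSemi_nonneg f K₀
  have hHg0 : 0 ≤ Hg := holderSemi_nonneg g K₀
  have hAf0 : 0 ≤ sSup ((fun x => |f x|) '' K₀) := by
    refine Real.sSup_nonneg ?_
    rintro r ⟨y, -, rfl⟩
    exact abs_nonneg _
  have hAg0 : 0 ≤ sSup ((fun x => |g x|) '' K₀) := by
    refine Real.sSup_nonneg ?_
    rintro r ⟨y, -, rfl⟩
    exact abs_nonneg _
  -- shifted points lie in K₀
  have hnorm_le : ∀ z ∈ tsupport ρ, ‖(x - ε • z) - x‖ ≤ ε := by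
    intro z hz
    have hz1 : ‖z‖ < 1 := by
      have := hρ_supp hz
      rwa [Metric.mem_ball, dist_zero_right] at this
    rw [sub_sub_cancel_left, norm_neg, norm_smul, Real.norm_eq_abs, abs_of_pos hε0]
    nlinarith [norm_nonneg z]
  have hmem : ∀ z ∈ tsupport ρ, x - ε • z ∈ K₀ := by
    intro z hz
    have h1 : Metric.infDist (x - ε • z) K ≤ dist (x - ε • z) x :=
      Metric.infDist_le_dist_of_mem hxK
    have h2 : dist (x - ε • z) x ≤ ε := by
      rw [dist_eq_norm]; exact hnorm_le z hz
    exact le_trans h1 (le_trans h2 hεlt.le)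
  -- pointwise Hölder bounds
  have hεα0 : 0 ≤ ε ^ α := Real.rpow_nonneg hε0.le α
  have hfb : ∀ z ∈ tsupport ρ, |f (x - ε • z) - f x| ≤ Hf * ε ^ α := by
    intro z hz
    refine (holder_le hα0 hfH (hmem z hz) (hK₀K hxK)).trans ?_
    exact mul_le_mul_of_nonneg_left
      (Real.rpow_le_rpow (norm_nonneg _) (hnorm_le z hz) hα0.le) hHf0
  have hgb : ∀ z ∈ tsupport ρ, |g (x - ε • z) - g x| ≤ Hg * ε ^ α := by
    intro z hz
    refine (holder_le hα0 hgH (hmem z hz) (hK₀K hxK)).trans ?_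
    exact mul_le_mul_of_nonneg_left
      (Real.rpow_le_rpow (norm_nonneg _) (hnorm_le z hz) hα0.le) hHg0
  -- integrability facts
  have hρc : Continuous ρ := hρ_smooth.continuous
  have hρK : HasCompactSupport ρ :=
    Metric.isCompact_of_isClosed_isBounded (isClosed_tsupport ρ)
      (Metric.isBounded_ball.subset hρ_supp)
  have hρint2 : Integrable ρ := hρc.integrable_of_hasCompactSupport hρK
  set U := (fun z : EuclideanSpace ℝ (Fin d) => x - ε • z) ⁻¹' V with hUdef
  have hmapc : Continuous fun z : EuclideanSpace ℝ (Fin d) => x - ε • z :=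
    continuous_const.sub (continuous_id.const_smul ε)
  have hUopen : IsOpen U := hV.preimage hmapc
  have hsubU : tsupport ρ ⊆ U := fun z hz => hK₀V (hmem z hz)
  have hint : ∀ φ : EuclideanSpace ℝ (Fin d) → ℝ,
      (∀ z ∈ U, ContinuousAt φ z) → Integrable fun z => ρ z * φ z := by
    intro φ hφ
    have hF : Continuous fun z => ρ z * φ z := by
      rw [continuous_iff_continuousAt]
      intro z
      by_cases hz : z ∈ U
      · exact hρc.continuousAt.mul (hφ z hz)
      · have hzs : z ∉ tsupport ρ := fun h => hz (hsubU h)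
        have heq : (fun w => ρ w * φ w) =ᶠ[nhds z] fun _ => 0 := by
          filter_upwards [(isClosed_tsupport ρ).isOpen_compl.mem_nhds hzs] with w hw
          simp [image_eq_zero_of_notMem_tsupport hw]
        exact heq.continuousAt
    have hFs : HasCompactSupport fun z => ρ z * φ z := hρK.mul_right
    exact hF.integrable_of_hasCompactSupport hFs
  have hcontf : ∀ z ∈ U, ContinuousAt (fun w => f (x - ε • w)) z := fun z hz =>
    ContinuousAt.comp (g := f) (f := fun w => x - ε • w) (x := z)
      (continuousAt_of_memHolderLoc hα0 hV hf hz) hmapc.continuousAt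
  have hcontg : ∀ z ∈ U, ContinuousAt (fun w => g (x - ε • w)) z := fun z hz =>
    ContinuousAt.comp (g := g) (f := fun w => x - ε • w) (x := z)
      (continuousAt_of_memHolderLoc hα0 hV hg hz) hmapc.continuousAt
  have hconst : ∀ c : ℝ, (∫ z : EuclideanSpace ℝ (Fin d), ρ z * c) = c := by
    intro c
    rw [integral_mul_const, hρ_int, one_mul]
  -- bound on rEps
  have hrb : |rEps ρ ε f g x| ≤ Hf * ε ^ α * (Hg * ε ^ α) := by
    have key : ∀ z, ‖ρ z * ((f (x - ε • z) - f x) * (g (x - ε • z) - g x))‖ ≤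
        ρ z * (Hf * ε ^ α * (Hg * ε ^ α)) := by
      intro z
      by_cases hz : z ∈ tsupport ρ
      · rw [Real.norm_eq_abs, abs_mul, abs_of_nonneg (hρ_nonneg z), abs_mul]
        refine mul_le_mul_of_nonneg_left ?_ (hρ_nonneg z)
        exact mul_le_mul (hfb z hz) (hgb z hz) (abs_nonneg _) (mul_nonneg hHf0 hεα0)
      · rw [image_eq_zero_of_notMem_tsupport hz]; simp
    have h := norm_integral_le_of_norm_le (hρint2.mul_const _)
      (Filter.Eventually.of_forall key)
    rw [hconst] at h
    simpa [rEps, Real.norm_eq_abs] using h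
  -- bounds on mollification errors
  have hmf : |f x - mollify ρ ε f x| ≤ Hf * ε ^ α := by
    have hfint : Integrable fun z => ρ z * f (x - ε • z) := hint _ hcontf
    have heq : f x - mollify ρ ε f x = ∫ z, ρ z * (f x - f (x - ε • z)) := by
      rw [mollify]
      conv_lhs => rw [← hconst (f x)]
      rw [← integral_sub (hρint2.mul_const _) hfint]
      congr 1
      ext z
      ring
    rw [heq]
    have key : ∀ z, ‖ρ z * (f x - f (x - ε • z))‖ ≤ ρ z * (Hf * ε ^ α) := by
      intro z
      by_cases hz : z ∈ tsupport ρ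
      · rw [Real.norm_eq_abs, abs_mul, abs_of_nonneg (hρ_nonneg z)]
        refine mul_le_mul_of_nonneg_left ?_ (hρ_nonneg z)
        rw [abs_sub_comm]
        exact hfb z hz
      · rw [image_eq_zero_of_notMem_tsupport hz]; simp
    have h := norm_integral_le_of_norm_le (hρint2.mul_const _)
      (Filter.Eventually.of_forall key)
    rw [hconst] at h
    simpa [Real.norm_eq_abs] using h
  have hmg : |g x - mollify ρ ε g x| ≤ Hg * ε ^ α := by
    have hgint : Integrable fun z => ρ z * g (x - ε • z) := hint _ hcontg
    have heq : g x - mollify ρ ε g x = ∫ z, ρ z * (g x - g (x - ε • z)) := by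
      rw [mollify]
      conv_lhs => rw [← hconst (g x)]
      rw [← integral_sub (hρint2.mul_const _) hgint]
      congr 1
      ext z
      ring
    rw [heq]
    have key : ∀ z, ‖ρ z * (g x - g (x - ε • z))‖ ≤ ρ z * (Hg * ε ^ α) := by
      intro z
      by_cases hz : z ∈ tsupport ρ
      · rw [Real.norm_eq_abs, abs_mul, abs_of_nonneg (hρ_nonneg z)]
        refine mul_le_mul_of_nonneg_left ?_ (hρ_nonneg z)
        rw [abs_sub_comm]
        exact hgb z hz
      · rw [image_eq_zero_of_notMem_tsupport hz]; simp
    have h := norm_integral_le_of_norm_le (hρint2.mul_const _)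
      (Filter.Eventually.of_forall key)
    rw [hconst] at h
    simpa [Real.norm_eq_abs] using h
  -- assemble
  have hprod : |(f x - mollify ρ ε f x) * (g x - mollify ρ ε g x)| ≤
      Hf * ε ^ α * (Hg * ε ^ α) := by
    rw [abs_mul]
    exact mul_le_mul hmf hmg (abs_nonneg _) (mul_nonneg hHf0 hεα0)
  have hfinal : |REps ρ ε f g x| ≤ 2 * (Hf * ε ^ α * (Hg * ε ^ α)) := by
    rw [REps]
    calc |rEps ρ ε f g x - (f x - mollify ρ ε f x) * (g x - mollify ρ ε g x)|
        ≤ |rEps ρ ε f g x| +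
          |(f x - mollify ρ ε f x) * (g x - mollify ρ ε g x)| := by
          rw [sub_eq_add_neg]
          exact (abs_add_le _ _).trans (by rw [abs_neg])
      _ ≤ Hf * ε ^ α * (Hg * ε ^ α) + Hf * ε ^ α * (Hg * ε ^ α) := add_le_add hrb hprod
      _ = 2 * (Hf * ε ^ α * (Hg * ε ^ α)) := by ring
  have hrw : 2 * (Hf * ε ^ α * (Hg * ε ^ α)) = 2 * ε ^ (2 * α) * Hf * Hg := by
    rw [two_mul α, Real.rpow_add hε0]
    ring
  have hNf : Hf ≤ holderNorm α f K₀ := le_add_of_nonneg_left hAf0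
  have hNg : Hg ≤ holderNorm α g K₀ := le_add_of_nonneg_left hAg0
  have hNf0 : 0 ≤ holderNorm α f K₀ := add_nonneg hAf0 hHf0
  have hε2α0 : 0 ≤ (2:ℝ) * ε ^ (2 * α) :=
    mul_nonneg (by norm_num) (Real.rpow_nonneg hε0.le _)
  calc |REps ρ ε f g x| ≤ 2 * ε ^ (2 * α) * Hf * Hg := by rw [← hrw]; exact hfinal
    _ ≤ 2 * ε ^ (2 * α) * holderNorm α f K₀ * holderNorm α g K₀ := by
        refine mul_le_mul (mul_le_mul_of_nonneg_left hNf hε2α0) hNg hHg0 ?_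
        exact mul_nonneg hε2α0 hNf0
end

section
/- Let V be an open set in ℝ^d, ε > 0 such that V^ε = {x ∈ V : dist(x, ℝ^d ∖ V) > ε} is nonempty, and let f, g ∈ L²_loc(V). Then at every point of V^ε the identity (fg)^ε = f^ε g^ε + R^ε(f,g) holds; in particular R^ε(f,g) is a smooth function on V^ε. -/
open MeasureTheory Set

/-- `V^ε = {x ∈ V : dist(x, ℝ^d ∖ V) > ε}`. -/
def innerSet {d : ℕ} (V : Set (EuclideanSpace ℝ (Fin d))) (ε : ℝ) :
    Set (EuclideanSpace ℝ (Fin d)) :=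
  {x ∈ V | ENNReal.ofReal ε < EMetric.infEdist x Vᶜ}

section AuxLemmas
variable {d : ℕ}

local notation "E" => EuclideanSpace ℝ (Fin d)

lemma closedBall_subset_of_infEdist {V : Set (EuclideanSpace ℝ (Fin d))} {r : ℝ}
    {x : EuclideanSpace ℝ (Fin d)} (h : ENNReal.ofReal r < EMetric.infEdist x Vᶜ) :
    Metric.closedBall x r ⊆ V := by
  intro y hy
  by_contra hyV
  have h1 : EMetric.infEdist x Vᶜ ≤ edist x y := EMetric.infEdist_le_edist_of_mem hyV
  have h2 : edist x y ≤ ENNReal.ofReal r := by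
    rw [edist_dist]
    exact ENNReal.ofReal_le_ofReal (by simpa [dist_comm] using hy)
  exact absurd (h.trans_le (h1.trans h2)) (lt_irrefl _)

lemma int_aux {ρ : EuclideanSpace ℝ (Fin d) → ℝ} (hρc : Continuous ρ)
    (hρ_supp : tsupport ρ ⊆ Metric.ball 0 1)
    (hbd : ∃ C, ∀ x, ‖ρ x‖ ≤ C) {ε : ℝ} (hε : 0 < ε)
    (x : EuclideanSpace ℝ (Fin d)) {h : EuclideanSpace ℝ (Fin d) → ℝ}
    (hh : IntegrableOn h (Metric.closedBall x ε)) :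
    Integrable (fun z => ρ z * h (x - ε • z)) := by
  set h' : EuclideanSpace ℝ (Fin d) → ℝ := (Metric.closedBall x ε).indicator h with hh'def
  have hh' : Integrable h' := hh.integrable_indicator Metric.isClosed_closedBall.measurableSet
  have h1 : Integrable (fun t => h' (x - t)) := (integrable_comp_sub_left h' x).2 hh'
  have h2 : Integrable (fun z => h' (x - ε • z)) := h1.comp_smul hε.ne'
  have h3 : Integrable (fun z => ρ z * h' (x - ε • z)) :=
    h2.bdd_mul hρc.aestronglyMeasurable (Filter.Eventually.of_forall hbd.choose_spec)
  refine h3.congr (Filter.Eventually.of_forall fun z => ?_)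
  rcases eq_or_ne (ρ z) 0 with h0 | h0
  · simp [h0]
  · have hz : z ∈ Metric.ball (0 : EuclideanSpace ℝ (Fin d)) 1 :=
      hρ_supp (subset_tsupport ρ h0)
    have hmem : x - ε • z ∈ Metric.closedBall x ε := by
      rw [Metric.mem_closedBall, dist_comm, dist_eq_norm]
      have : x - (x - ε • z) = ε • z := by abel
      rw [this, norm_smul, Real.norm_eq_abs, abs_of_pos hε]
      have hz1 : ‖z‖ < 1 := by simpa using hz
      nlinarith [norm_nonneg z]
    show ρ z * h' (x - ε • z) = _
    rw [hh'def, indicator_of_mem hmem]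

variable {d : ℕ}

lemma mollify_eq_convolution {ρ : EuclideanSpace ℝ (Fin d) → ℝ} {ε : ℝ} (hε : 0 < ε)
    (h : EuclideanSpace ℝ (Fin d) → ℝ) (x : EuclideanSpace ℝ (Fin d)) :
    mollify ρ ε h x =
      convolution (fun t => (ε ^ d)⁻¹ * ρ (ε⁻¹ • t)) h
        (ContinuousLinearMap.lsmul ℝ ℝ) volume x := by
  have key : ∀ z : EuclideanSpace ℝ (Fin d),
      (fun t => ρ (ε⁻¹ • t) * h (x - t)) (ε • z) = ρ z * h (x - ε • z) := by
    intro z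
    simp [smul_smul, inv_mul_cancel₀ hε.ne']
  have h1 : mollify ρ ε h x = ∫ z, (fun t => ρ (ε⁻¹ • t) * h (x - t)) (ε • z) := by
    unfold mollify
    exact (integral_congr_ae (Filter.Eventually.of_forall fun z => (key z).symm))
  rw [h1, MeasureTheory.Measure.integral_comp_smul volume (fun t => ρ (ε⁻¹ • t) * h (x - t)) ε]
  rw [finrank_euclideanSpace_fin]
  rw [abs_of_pos (by positivity : (0:ℝ) < (ε ^ d)⁻¹)]
  rw [convolution]
  simp only [ContinuousLinearMap.lsmul_apply, smul_eq_mul]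
  rw [← integral_const_mul]
  congr 1
  funext t
  ring

lemma mollify_contDiffOn {ρ : EuclideanSpace ℝ (Fin d) → ℝ}
    (hρ_smooth : ContDiff ℝ (⊤ : ℕ∞) ρ) (hρ_supp : tsupport ρ ⊆ Metric.ball 0 1)
    {ε : ℝ} (hε : 0 < ε) {V : Set (EuclideanSpace ℝ (Fin d))}
    {h : EuclideanSpace ℝ (Fin d) → ℝ}
    (hh : ∀ K : Set (EuclideanSpace ℝ (Fin d)), IsCompact K → K ⊆ V → IntegrableOn h K) :
    ContDiffOn ℝ (⊤ : ℕ∞) (mollify ρ ε h) (innerSet V ε) := by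
  intro x₀ hx₀
  obtain ⟨r, hr0, hr1, hr2⟩ := ENNReal.lt_iff_exists_real_btwn.1 hx₀.2
  have hεr : ε < r := by
    by_contra hc
    exact absurd (hr1.trans_le (ENNReal.ofReal_le_ofReal (not_lt.1 hc))) (lt_irrefl _)
  set K := Metric.closedBall x₀ r with hKdef
  have hKV : K ⊆ V := by
    intro y hy
    by_contra hyV
    have h1 : EMetric.infEdist x₀ Vᶜ ≤ edist x₀ y := EMetric.infEdist_le_edist_of_mem hyV
    have h2 : edist x₀ y ≤ ENNReal.ofReal r := by
      rw [edist_dist]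
      refine ENNReal.ofReal_le_ofReal ?_
      have := Metric.mem_closedBall.1 hy
      rwa [dist_comm] at this
    exact absurd (hr2.trans_le (h1.trans h2)) (lt_irrefl _)
  set h' : EuclideanSpace ℝ (Fin d) → ℝ := K.indicator h with hh'def
  have hh' : Integrable h' :=
    (hh K (isCompact_closedBall x₀ r) hKV).integrable_indicator
      Metric.isClosed_closedBall.measurableSet
  set φ : EuclideanSpace ℝ (Fin d) → ℝ := fun t => (ε ^ d)⁻¹ * ρ (ε⁻¹ • t) with hφdef
  have hφ_smooth : ContDiff ℝ (⊤ : ℕ∞) φ :=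
    contDiff_const.mul (hρ_smooth.comp (contDiff_id.const_smul ε⁻¹))
  have hφ_supp : HasCompactSupport φ := by
    apply HasCompactSupport.intro (isCompact_closedBall (0 : EuclideanSpace ℝ (Fin d)) ε)
    intro t ht
    have : ρ (ε⁻¹ • t) = 0 := by
      apply image_eq_zero_of_notMem_tsupport
      intro hmem
      have := hρ_supp hmem
      simp only [Metric.mem_ball, dist_zero_right, norm_smul, Real.norm_eq_abs,
        abs_of_pos (inv_pos.2 hε)] at this
      apply ht
      simp only [Metric.mem_closedBall, dist_zero_right]
      calc ‖t‖ = ε * (ε⁻¹ * ‖t‖) := by field_simp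
        _ ≤ ε * 1 := by nlinarith
        _ = ε := mul_one ε
    simp [hφdef, this]
  have hconv : ContDiff ℝ (⊤ : ℕ∞)
      (convolution φ h' (ContinuousLinearMap.lsmul ℝ ℝ) volume) :=
    hφ_supp.contDiff_convolution_left _ hφ_smooth hh'.locallyIntegrable
  have heq : ∀ x ∈ Metric.ball x₀ (r - ε),
      mollify ρ ε h x = convolution φ h' (ContinuousLinearMap.lsmul ℝ ℝ) volume x := by
    intro x hx
    rw [← mollify_eq_convolution hε h']
    unfold mollify
    apply integral_congr_ae (Filter.Eventually.of_forall fun z => ?_)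
    rcases eq_or_ne (ρ z) 0 with h0 | h0
    · simp [h0]
    · have hz : ‖z‖ < 1 := by simpa using hρ_supp (subset_tsupport ρ h0)
      have hmem : x - ε • z ∈ K := by
        rw [hKdef, Metric.mem_closedBall]
        have hxd : dist x x₀ < r - ε := by simpa using hx
        calc dist (x - ε • z) x₀ ≤ dist (x - ε • z) x + dist x x₀ := dist_triangle _ _ _
          _ = ‖ε • z‖ + dist x x₀ := by
              rw [dist_eq_norm, sub_sub_cancel_left, norm_neg]
          _ ≤ ε * ‖z‖ + dist x x₀ := by
              rw [norm_smul, Real.norm_eq_abs, abs_of_pos hε]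
          _ ≤ r := by nlinarith
      show ρ z * h (x - ε • z) = ρ z * h' (x - ε • z)
      rw [hh'def, indicator_of_mem hmem]
  have hball : Metric.ball x₀ (r - ε) ∈ nhds x₀ :=
    Metric.ball_mem_nhds x₀ (by linarith)
  have : ContDiffAt ℝ (⊤ : ℕ∞) (mollify ρ ε h) x₀ := by
    apply (hconv.contDiffAt).congr_of_eventuallyEq
    exact Filter.eventually_of_mem hball fun x hx => heq x hx
  exact this.contDiffWithinAt

end AuxLemmas

/-- At every point of `V^ε` one has `(fg)^ε = f^ε g^ε + R^ε(f,g)`; in particular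
`R^ε(f,g)` is smooth on `V^ε`. -/
theorem stmt7 (d : ℕ)
    (ρ : EuclideanSpace ℝ (Fin d) → ℝ)
    (hρ_smooth : ContDiff ℝ (⊤ : ℕ∞) ρ) (hρ_nonneg : ∀ x, 0 ≤ ρ x)
    (hρ_supp : tsupport ρ ⊆ Metric.ball 0 1)
    (hρ_symm : ∀ x, ρ (-x) = ρ x) (hρ_int : (∫ x, ρ x) = 1)
    (V : Set (EuclideanSpace ℝ (Fin d))) (hV : IsOpen V)
    (ε : ℝ) (hε : 0 < ε) (hne : (innerSet V ε).Nonempty)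
    (f g : EuclideanSpace ℝ (Fin d) → ℝ)
    (hf : ∀ K : Set (EuclideanSpace ℝ (Fin d)), IsCompact K → K ⊆ V →
      MemLp f 2 (volume.restrict K))
    (hg : ∀ K : Set (EuclideanSpace ℝ (Fin d)), IsCompact K → K ⊆ V →
      MemLp g 2 (volume.restrict K)) :
    (∀ x ∈ innerSet V ε,
        mollify ρ ε (fun y => f y * g y) x = mollify ρ ε f x * mollify ρ ε g x
          + REps ρ ε f g x) ∧
      ContDiffOn ℝ (⊤ : ℕ∞) (REps ρ ε f g) (innerSet V ε) := by

  have hρc : Continuous ρ := hρ_smooth.continuous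
  have hρcs : HasCompactSupport ρ :=
    HasCompactSupport.intro (isCompact_closedBall 0 1) fun x hx =>
      image_eq_zero_of_notMem_tsupport fun hmem =>
        hx (Metric.ball_subset_closedBall (hρ_supp hmem))
  have hbd : ∃ C, ∀ x, ‖ρ x‖ ≤ C := hρcs.exists_bound_of_continuous hρc
  have hρint : Integrable ρ := hρc.integrable_of_hasCompactSupport hρcs
  have hfK : ∀ K : Set (EuclideanSpace ℝ (Fin d)), IsCompact K → K ⊆ V →
      IntegrableOn f K := by
    intro K hK hKV
    haveI : IsFiniteMeasure (volume.restrict K) :=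
      ⟨by rw [Measure.restrict_apply_univ]; exact hK.measure_lt_top⟩
    exact (hf K hK hKV).integrable one_le_two
  have hgK : ∀ K : Set (EuclideanSpace ℝ (Fin d)), IsCompact K → K ⊆ V →
      IntegrableOn g K := by
    intro K hK hKV
    haveI : IsFiniteMeasure (volume.restrict K) :=
      ⟨by rw [Measure.restrict_apply_univ]; exact hK.measure_lt_top⟩
    exact (hg K hK hKV).integrable one_le_two
  have hfgK : ∀ K : Set (EuclideanSpace ℝ (Fin d)), IsCompact K → K ⊆ V →
      IntegrableOn (fun y => f y * g y) K := by
    intro K hK hKV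
    have hsm : MemLp (f • g) 1 (volume.restrict K) :=
      (hg K hK hKV).smul (hf K hK hKV)
    have h2 : Integrable (f • g) (volume.restrict K) := memLp_one_iff_integrable.1 hsm
    exact h2
  have part1 : ∀ x ∈ innerSet V ε,
      mollify ρ ε (fun y => f y * g y) x = mollify ρ ε f x * mollify ρ ε g x
        + REps ρ ε f g x := by
    intro x hx
    have hB : Metric.closedBall x ε ⊆ V := closedBall_subset_of_infEdist hx.2
    have hBc := isCompact_closedBall x ε
    have I1 : Integrable (fun z => ρ z * f (x - ε • z)) :=
      int_aux hρc hρ_supp hbd hε x (hfK _ hBc hB)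
    have I2 : Integrable (fun z => ρ z * g (x - ε • z)) :=
      int_aux hρc hρ_supp hbd hε x (hgK _ hBc hB)
    have I3 : Integrable (fun z => ρ z * (f (x - ε • z) * g (x - ε • z))) :=
      int_aux hρc hρ_supp hbd hε x (hfgK _ hBc hB)
    have expand : (fun z => ρ z * ((f (x - ε • z) - f x) * (g (x - ε • z) - g x)))
        = fun z => (ρ z * (f (x - ε • z) * g (x - ε • z)) - f x * (ρ z * g (x - ε • z)))
            - (g x * (ρ z * f (x - ε • z)) - (f x * g x) * ρ z) := by
      funext z; ring
    have key : (∫ z, ρ z * ((f (x - ε • z) - f x) * (g (x - ε • z) - g x)))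
        = (∫ z, ρ z * (f (x - ε • z) * g (x - ε • z)))
            - f x * (∫ z, ρ z * g (x - ε • z))
            - (g x * (∫ z, ρ z * f (x - ε • z)) - (f x * g x) * ∫ z, ρ z) := by
      have I2' : Integrable (fun z => f x * (ρ z * g (x - ε • z))) := I2.const_mul (f x)
      have I1' : Integrable (fun z => g x * (ρ z * f (x - ε • z))) := I1.const_mul (g x)
      have Iρ' : Integrable (fun z => (f x * g x) * ρ z) := hρint.const_mul (f x * g x)
      have J1 : Integrable (fun z =>
          ρ z * (f (x - ε • z) * g (x - ε • z)) - f x * (ρ z * g (x - ε • z))) := I3.sub I2'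
      have J2 : Integrable (fun z =>
          g x * (ρ z * f (x - ε • z)) - (f x * g x) * ρ z) := I1'.sub Iρ'
      rw [expand, integral_sub J1 J2, integral_sub I3 I2', integral_sub I1' Iρ',
        integral_const_mul, integral_const_mul, integral_const_mul]
    simp only [mollify, rEps, REps]
    rw [key, hρ_int]
    ring
  refine ⟨part1, ?_⟩
  have hmf := mollify_contDiffOn hρ_smooth hρ_supp hε hfK
  have hmg := mollify_contDiffOn hρ_smooth hρ_supp hε hgK
  have hmfg := mollify_contDiffOn hρ_smooth hρ_supp hε hfgK
  refine (hmfg.sub (hmf.mul hmg)).congr fun x hx => ?_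
  have := part1 x hx
  linarith
end
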